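/- Let c > 0, l ∈ [0,1] and x ∈ (0,1]. Then ∫₀ᶜ v·x·(∫_{v·x}^c (1/c) du)·(1/c) dv + l·∫₀^{c·x} (v/x)·(∫_{v/x}^c (1/c) du)·(1/c) dv = c·(x/2 − x²/3 + l·x/6). Moreover, extending this expression to x = 0 by the value 0, the function x ↦ c·(x/2 − x²/3 + l·x/6) attains its maximum over x ∈ [0,1] uniquely at x = (3+l)/4, with maximum value c·(3+l)²/48. -/

import Mathlib

open MeasureTheory Set

lemma poly_int (C D a b : ℝ) :
    ∫ v in a..b, (C * v + D * v ^ 2)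
      = (C * b ^ 2 / 2 + D * b ^ 3 / 3) - (C * a ^ 2 / 2 + D * a ^ 3 / 3) := by
  have h : ∀ v ∈ Set.uIcc a b,
      HasDerivAt (fun v : ℝ => C * v ^ 2 / 2 + D * v ^ 3 / 3) (C * v + D * v ^ 2) v := by
    intro v _
    have h1 : HasDerivAt (fun v : ℝ => v ^ 2) (2 * v) v := by
      simpa using hasDerivAt_pow 2 v
    have h2 : HasDerivAt (fun v : ℝ => v ^ 3) (3 * v ^ 2) v := by
      simpa using hasDerivAt_pow 3 v
    have := ((h1.const_mul C).div_const 2).add ((h2.const_mul D).div_const 3)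
    refine this.congr_deriv ?_
    ring
  rw [intervalIntegral.integral_eq_sub_of_hasDerivAt h
    (Continuous.intervalIntegrable (by continuity) a b)]

/-- Under the uniform density `1/c` on `[0,c]`, the expected revenue at signal ratio
`x ∈ (0,1]` and low CTR `l ∈ [0,1]` equals `c·(x/2 − x²/3 + l·x/6)`; moreover the
function `y ↦ c·(y/2 − y²/3 + l·y/6)` attains its maximum over `[0,1]` uniquely at
`y = (3+l)/4`, where it equals `c·(3+l)²/48`. -/
theorem uniform_revenue_formula_and_max (c l x : ℝ) (hc : 0 < c)
    (hl : l ∈ Set.Icc (0 : ℝ) 1) (hx : x ∈ Set.Ioc (0 : ℝ) 1) :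
    ((∫ v in (0 : ℝ)..c, v * x * (∫ _u in (v * x)..c, (1 / c)) * (1 / c))
        + l * ∫ v in (0 : ℝ)..(c * x), (v / x) * (∫ _u in (v / x)..c, (1 / c)) * (1 / c))
      = c * (x / 2 - x ^ 2 / 3 + l * x / 6)
    ∧ c * (((3 + l) / 4) / 2 - ((3 + l) / 4) ^ 2 / 3 + l * ((3 + l) / 4) / 6)
        = c * (3 + l) ^ 2 / 48
    ∧ (∀ y ∈ Set.Icc (0 : ℝ) 1,
        c * (y / 2 - y ^ 2 / 3 + l * y / 6) ≤ c * (3 + l) ^ 2 / 48)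
    ∧ (∀ y ∈ Set.Icc (0 : ℝ) 1,
        c * (y / 2 - y ^ 2 / 3 + l * y / 6) = c * (3 + l) ^ 2 / 48 → y = (3 + l) / 4) := by
  have hc0 : c ≠ 0 := hc.ne'
  have hx0 : x ≠ 0 := hx.1.ne'
  refine ⟨?_, by ring, ?_, ?_⟩
  · have e1 : (∫ v in (0 : ℝ)..c, v * x * (∫ _u in (v * x)..c, (1 / c)) * (1 / c))
        = ∫ v in (0 : ℝ)..c, ((x / c) * v + (-(x ^ 2) / c ^ 2) * v ^ 2) := by
      apply intervalIntegral.integral_congr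
      intro v _
      simp only [intervalIntegral.integral_const, smul_eq_mul]
      field_simp
      ring
    have e2 : (∫ v in (0 : ℝ)..(c * x), (v / x) * (∫ _u in (v / x)..c, (1 / c)) * (1 / c))
        = ∫ v in (0 : ℝ)..(c * x), ((1 / (x * c)) * v + (-(1 : ℝ) / (x ^ 2 * c ^ 2)) * v ^ 2) := by
      apply intervalIntegral.integral_congr
      intro v _
      simp only [intervalIntegral.integral_const, smul_eq_mul]
      field_simp
      ring
    rw [e1, e2, poly_int, poly_int]
    field_simp
    ring
  · intro y _
    nlinarith [sq_nonneg (y - (3 + l) / 4), hc.le, mul_nonneg hc.le (sq_nonneg (y - (3 + l) / 4))]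
  · intro y _ hy
    have h2 : c * (y - (3 + l) / 4) ^ 2 = 0 := by linear_combination -3 * hy
    have h3 : (y - (3 + l) / 4) ^ 2 = 0 := by
      rcases mul_eq_zero.1 h2 with h | h
      · exact absurd h hc0
      · exact h
    have := pow_eq_zero_iff (n := 2) (by norm_num) |>.1 h3
    linarith
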